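/- Let p = 2, K a field of characteristic 2, N ≥ 2, and work in O(1;N). The fourth-order operator D(f,g) = f'''·g' + f'·g''' + f''·g'' from F_0 ⊗ F_0 to F_4 (= F_0 since weights are in K of char 2) is vect(1;N)-invariant: L_{h∂}(D(f,g)) = D(L_{h∂}f, g) + D(f, L_{h∂}g) for all h∂ ∈ vect(1;N), where the weight is 0 on both sources. -/

import Mathlib

open Finset

/-- Multiplication in the divided power algebra `O(1;N)` truncated at `n = p^N`;
elements are given by their coefficients in the basis `u^{(r)}`, `0 ≤ r < n`,
and `u^{(r)} · u^{(s)} = C(r+s, r) u^{(r+s)}` (zero if `r+s ≥ n`). -/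
def dpMul {K : Type*} [Field K] (n : ℕ) (f g : ℕ → K) : ℕ → K :=
  fun t => if t < n then ∑ i ∈ Finset.range (t + 1), ((t.choose i : K) * f i * g (t - i)) else 0

/-- The distinguished derivation `∂` of `O(1;N)`: `∂(u^{(r)}) = u^{(r-1)}`. -/
def dpDer {K : Type*} [Field K] (n : ℕ) (f : ℕ → K) : ℕ → K :=
  fun r => if r + 1 < n then f (r + 1) else 0

/-- Membership in `O(1;N)`: coefficients vanish in degrees `≥ n`. -/
def dpSupp {K : Type*} [Field K] (n : ℕ) (f : ℕ → K) : Prop := ∀ r, n ≤ r → f r = 0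

/-- Berezin-type integral: the coefficient of `u^{(n-1)}`. -/
def dpInt {K : Type*} [Field K] (n : ℕ) (f : ℕ → K) : K := f (n - 1)

/-- Lie derivative along `h∂ ∈ vect(1;N)` acting on the weighted density module
`F_a`: `L_{h∂}(f) = h·∂f + a·f·∂h`. -/
def dpLie {K : Type*} [Field K] (n : ℕ) (a : K) (h f : ℕ → K) : ℕ → K :=
  dpMul n h (dpDer n f) + a • dpMul n f (dpDer n h)


section gz22aux
variable {K : Type*} [Field K]


lemma dpMul_add_left (n : ℕ) (a b c : ℕ → K) :
    dpMul n (a + b) c = dpMul n a c + dpMul n b c := by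
  funext t
  simp only [dpMul, Pi.add_apply]
  split_ifs with h
  · rw [← Finset.sum_add_distrib]
    exact Finset.sum_congr rfl fun i _ => by ring
  · simp

lemma dpMul_add_right (n : ℕ) (a b c : ℕ → K) :
    dpMul n a (b + c) = dpMul n a b + dpMul n a c := by
  funext t
  simp only [dpMul, Pi.add_apply]
  split_ifs with h
  · rw [← Finset.sum_add_distrib]
    exact Finset.sum_congr rfl fun i _ => by ring
  · simp

lemma dpDer_add (n : ℕ) (a b : ℕ → K) :
    dpDer n (a + b) = dpDer n a + dpDer n b := by
  funext r
  simp only [dpDer, Pi.add_apply]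
  split_ifs with h <;> simp

lemma dpMul_comm (n : ℕ) (a b : ℕ → K) : dpMul n a b = dpMul n b a := by
  funext t
  simp only [dpMul]
  split_ifs with ht
  · rw [← Finset.sum_range_reflect (fun i => ((t.choose i : K) * b i * a (t - i))) (t + 1)]
    refine Finset.sum_congr rfl fun i hi => ?_
    rw [Finset.mem_range] at hi
    have h2 : i ≤ t := by omega
    have e1 : t + 1 - 1 - i = t - i := by omega
    have e2 : t - (t - i) = i := by omega
    simp only [e1, e2, Nat.choose_symm h2]
    ring
  · rfl

lemma dpMul_assoc (n : ℕ) (a b c : ℕ → K) :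
    dpMul n (dpMul n a b) c = dpMul n a (dpMul n b c) := by
  funext t
  simp only [dpMul]
  split_ifs with ht
  · have hL : ∀ i ∈ Finset.range (t + 1),
        (t.choose i : K) * (if i < n then ∑ j ∈ Finset.range (i + 1),
            ((i.choose j : K) * a j * b (i - j)) else 0) * c (t - i)
        = ∑ j ∈ Finset.range (i + 1),
            (t.choose i : K) * ((i.choose j : K) * a j * b (i - j)) * c (t - i) := by
      intro i hi
      rw [Finset.mem_range] at hi
      rw [if_pos (by omega), Finset.mul_sum, Finset.sum_mul]
    rw [Finset.sum_congr rfl hL]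
    rw [Finset.sum_comm' (t' := Finset.range (t + 1)) (s' := fun j => Finset.Ico j (t + 1))
      (by intro i j; simp [Finset.mem_range, Finset.mem_Ico]; omega)]
    refine Finset.sum_congr rfl fun j hj => ?_
    rw [Finset.mem_range] at hj
    rw [if_pos (by omega), Finset.mul_sum, Finset.sum_Ico_eq_sum_range,
      show t + 1 - j = t - j + 1 by omega]
    refine Finset.sum_congr rfl fun k hk => ?_
    rw [Finset.mem_range] at hk
    have h1 : j + k ≤ t := by omega
    have h2 : j ≤ j + k := by omega
    have key := Nat.choose_mul (n := t) (k := j + k) (s := j) h2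
    have e1 : j + k - j = k := by omega
    have e2 : t - j - k = t - (j + k) := by omega
    rw [e1] at key
    have ckey : ((t.choose (j + k) : K) * ((j + k).choose j : K)) =
        (t.choose j : K) * ((t - j).choose k : K) := by
      rw [← Nat.cast_mul, ← Nat.cast_mul, key]
    calc (t.choose (j + k) : K) * (((j + k).choose j : K) * a j * b (j + k - j)) * c (t - (j + k))
        = ((t.choose (j + k) : K) * ((j + k).choose j : K)) * a j * b k * c (t - (j + k)) := by
          rw [e1]; ring
      _ = (t.choose j : K) * a j * ((t - j).choose k : K) * b k * c (t - j - k) := by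
          rw [ckey, e2]; ring
      _ = (t.choose j : K) * a j * (((t - j).choose k : K) * b k * c (t - j - k)) := by ring
  · rfl



lemma dpDer_dpMul [CharP K 2] (N : ℕ) (a b : ℕ → K) :
    dpDer (2 ^ N) (dpMul (2 ^ N) a b)
      = dpMul (2 ^ N) (dpDer (2 ^ N) a) b + dpMul (2 ^ N) a (dpDer (2 ^ N) b) := by
  set n := 2 ^ N with hn
  funext r
  simp only [dpDer, dpMul, Pi.add_apply]
  by_cases h1 : r + 1 < n
  · have h2 : r < n := by omega
    rw [if_pos h1, if_pos h1, if_pos h2, if_pos h2]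
    have hL : ∑ i ∈ Finset.range (r + 1 + 1), ((r + 1).choose i : K) * a i * b (r + 1 - i)
        = (∑ i ∈ Finset.range (r + 1), (r.choose i : K) * a (i + 1) * b (r - i))
          + ((∑ i ∈ Finset.range r, (r.choose (i + 1) : K) * a (i + 1) * b (r - i))
            + a 0 * b (r + 1)) := by
      rw [Finset.sum_range_succ']
      have step : ∀ i ∈ Finset.range (r + 1),
          ((r + 1).choose (i + 1) : K) * a (i + 1) * b (r + 1 - (i + 1))
            = (r.choose i : K) * a (i + 1) * b (r - i)
              + (r.choose (i + 1) : K) * a (i + 1) * b (r - i) := by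
        intro i hi
        rw [Finset.mem_range] at hi
        have hc : ((r + 1).choose (i + 1) : K) = (r.choose i : K) + (r.choose (i + 1) : K) := by
          rw [Nat.choose_succ_succ' r i]; push_cast; ring
        rw [hc, show r + 1 - (i + 1) = r - i by omega]; ring
      rw [Finset.sum_congr rfl step, Finset.sum_add_distrib,
        Finset.sum_range_succ (fun i => (r.choose (i + 1) : K) * a (i + 1) * b (r - i)) r]
      simp only [Nat.choose_succ_self, Nat.cast_zero, zero_mul, add_zero,
        Nat.choose_zero_right, Nat.cast_one, one_mul, Nat.sub_zero]
      ring
    rw [hL]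
    congr 1
    · refine Finset.sum_congr rfl fun i hi => ?_
      rw [Finset.mem_range] at hi
      rw [if_pos (by omega)]
    · have hR2 : ∑ i ∈ Finset.range (r + 1),
          (r.choose i : K) * a i * (if r - i + 1 < n then b (r - i + 1) else 0)
          = ∑ i ∈ Finset.range (r + 1), (r.choose i : K) * a i * b (r + 1 - i) := by
        refine Finset.sum_congr rfl fun i hi => ?_
        rw [Finset.mem_range] at hi
        rw [if_pos (by omega), show r - i + 1 = r + 1 - i by omega]
      rw [hR2, Finset.sum_range_succ' (fun i => (r.choose i : K) * a i * b (r + 1 - i)) r]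
      simp only [Nat.choose_zero_right, Nat.cast_one, one_mul, Nat.sub_zero]
      congr 1
      refine Finset.sum_congr rfl fun i hi => ?_
      rw [Finset.mem_range] at hi
      rw [show r + 1 - (i + 1) = r - i by omega]
  · rw [if_neg h1]
    by_cases h2 : r < n
    · have hr : r + 1 = n := by omega
      rw [if_pos h2, if_pos h2]
      have hR1 : ∑ i ∈ Finset.range (r + 1),
          (r.choose i : K) * (if i + 1 < n then a (i + 1) else 0) * b (r - i)
          = ∑ i ∈ Finset.range r, (r.choose i : K) * a (i + 1) * b (r - i) := by
        rw [Finset.sum_range_succ, if_neg (by omega), mul_zero, zero_mul, add_zero]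
        refine Finset.sum_congr rfl fun i hi => ?_
        rw [Finset.mem_range] at hi
        rw [if_pos (by omega)]
      have hR2 : ∑ i ∈ Finset.range (r + 1),
          (r.choose i : K) * a i * (if r - i + 1 < n then b (r - i + 1) else 0)
          = ∑ i ∈ Finset.range r, (r.choose (i + 1) : K) * a (i + 1) * b (r - i) := by
        rw [Finset.sum_range_succ' (fun i => (r.choose i : K) * a i *
          (if r - i + 1 < n then b (r - i + 1) else 0)) r]
        rw [show r - 0 + 1 = r + 1 by omega, if_neg (by omega), mul_zero, add_zero]
        refine Finset.sum_congr rfl fun i hi => ?_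
        rw [Finset.mem_range] at hi
        rw [if_pos (by omega), show r - (i + 1) + 1 = r - i by omega]
      rw [hR1, hR2, ← Finset.sum_add_distrib]
      symm
      refine Finset.sum_eq_zero fun i hi => ?_
      rw [Finset.mem_range] at hi
      have hcast : ((r + 1).choose (i + 1) : K) = 0 := by
        have hdvd : (2 : ℕ) ∣ (r + 1).choose (i + 1) := by
          rw [hr, hn]
          exact Nat.Prime.dvd_choose_pow Nat.prime_two (by omega) (by omega)
        exact (CharP.cast_eq_zero_iff K 2 _).mpr hdvd
      have hc : (r.choose i : K) + (r.choose (i + 1) : K) = 0 := by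
        rw [← Nat.cast_add, ← Nat.choose_succ_succ' r i]; exact hcast
      calc (r.choose i : K) * a (i + 1) * b (r - i)
            + (r.choose (i + 1) : K) * a (i + 1) * b (r - i)
          = ((r.choose i : K) + (r.choose (i + 1) : K)) * a (i + 1) * b (r - i) := by ring
        _ = 0 := by rw [hc, zero_mul, zero_mul]
    · rw [if_neg h2, if_neg h2, add_zero]

lemma dpMul_left_comm (n : ℕ) (a b c : ℕ → K) :
    dpMul n a (dpMul n b c) = dpMul n b (dpMul n a c) := by
  rw [← dpMul_assoc, dpMul_comm n a b, dpMul_assoc]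

end gz22aux

/-- The fourth-order operator D(f,g) = f'''·g' + f'·g''' + f''·g'' in
characteristic 2, namely Gz_{2,2}(df, dg) : F_0 ⊗ F_0 → F_4, is
vect(1;N)-invariant for N ≥ 2. -/
theorem gz22_dd_invariant {K : Type*} [Field K] (N : ℕ) (hN : 2 ≤ N)
    [CharP K 2] (h f g : ℕ → K)
    (hh : dpSupp (2 ^ N) h) (hf : dpSupp (2 ^ N) f) (hg : dpSupp (2 ^ N) g) :
    dpLie (2 ^ N) (4 : K) h
        (dpMul (2 ^ N) ((dpDer (2 ^ N))^[3] f) ((dpDer (2 ^ N))^[1] g)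
          + dpMul (2 ^ N) ((dpDer (2 ^ N))^[1] f) ((dpDer (2 ^ N))^[3] g)
          + dpMul (2 ^ N) ((dpDer (2 ^ N))^[2] f) ((dpDer (2 ^ N))^[2] g))
      = (dpMul (2 ^ N) ((dpDer (2 ^ N))^[3] (dpLie (2 ^ N) 0 h f)) ((dpDer (2 ^ N))^[1] g)
          + dpMul (2 ^ N) ((dpDer (2 ^ N))^[1] (dpLie (2 ^ N) 0 h f)) ((dpDer (2 ^ N))^[3] g)
          + dpMul (2 ^ N) ((dpDer (2 ^ N))^[2] (dpLie (2 ^ N) 0 h f)) ((dpDer (2 ^ N))^[2] g))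
        + (dpMul (2 ^ N) ((dpDer (2 ^ N))^[3] f) ((dpDer (2 ^ N))^[1] (dpLie (2 ^ N) 0 h g))
          + dpMul (2 ^ N) ((dpDer (2 ^ N))^[1] f) ((dpDer (2 ^ N))^[3] (dpLie (2 ^ N) 0 h g))
          + dpMul (2 ^ N) ((dpDer (2 ^ N))^[2] f) ((dpDer (2 ^ N))^[2] (dpLie (2 ^ N) 0 h g))) := by
  have h4 : (4 : K) = 0 := by
    have : ((4 : ℕ) : K) = 0 := (CharP.cast_eq_zero_iff K 2 4).mpr (by norm_num)
    simpa using this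
  have hlie4 : ∀ X : ℕ → K, dpLie (2 ^ N) (4 : K) h X = dpMul (2 ^ N) h (dpDer (2 ^ N) X) := by
    intro X; unfold dpLie; rw [h4, zero_smul, add_zero]
  have hlie0 : ∀ X : ℕ → K, dpLie (2 ^ N) (0 : K) h X = dpMul (2 ^ N) h (dpDer (2 ^ N) X) := by
    intro X; unfold dpLie; rw [zero_smul, add_zero]
  have it1 : ∀ x : ℕ → K, (dpDer (2 ^ N))^[1] x = dpDer (2 ^ N) x := fun _ => rfl
  have it2 : ∀ x : ℕ → K, (dpDer (2 ^ N))^[2] x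
      = dpDer (2 ^ N) (dpDer (2 ^ N) x) := fun _ => rfl
  have it3 : ∀ x : ℕ → K, (dpDer (2 ^ N))^[3] x
      = dpDer (2 ^ N) (dpDer (2 ^ N) (dpDer (2 ^ N) x)) := fun _ => rfl
  simp only [hlie4, hlie0, it1, it2, it3]
  simp only [dpDer_add, dpDer_dpMul, dpMul_add_left, dpMul_add_right, dpMul_assoc]
  simp only [dpMul_comm, dpMul_left_comm]
  have two : ∀ x : ℕ → K, (2 : ℕ) • x = 0 := by
    intro x
    funext r
    have h2 : (2 : K) = 0 := by exact_mod_cast CharP.cast_eq_zero K 2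
    show (2 : ℕ) • x r = 0
    rw [two_nsmul]
    linear_combination x r * h2
  have four : ∀ x : ℕ → K, (4 : ℕ) • x = 0 := by
    intro x
    rw [show (4 : ℕ) = 2 * 2 from rfl, mul_smul, two]
  abel_nf
  have h2P : ((2 : ℤ) : ℕ → K) = 0 := by
    funext r
    show ((2 : ℤ) : ℕ → K) r = 0
    rw [Pi.intCast_apply]
    have : ((2 : ℤ) : K) = ((2 : ℕ) : K) := by norm_cast
    rw [this]
    exact CharP.cast_eq_zero K 2
  have h4P : ((4 : ℤ) : ℕ → K) = 0 := by
    funext r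
    show ((4 : ℤ) : ℕ → K) r = 0
    rw [Pi.intCast_apply]
    have : ((4 : ℤ) : K) = ((4 : ℕ) : K) := by norm_cast
    rw [this]
    exact (CharP.cast_eq_zero_iff K 2 4).mpr (by norm_num)
  simp only [zsmul_eq_mul, h2P, h4P, zero_mul, add_zero, zero_add]
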